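/- (Grouped force expression for distinguishable particles with PBC.) Let V_D be defined by exp(−βV_D(r)) = ∑_{w} exp(−βE^{id,w}(r)) over winding assignments w : Fin N → Fin P → Λ. Then for every particle ℓ, bead j, and coordinate i, −∂V_D/∂(r_ℓ^j)_i = ∑_{w∈Λ} p_{ℓ,j−1}(w)·(−2c)·(r_ℓ^j − r_ℓ^{j−1} − w·L)_i + ∑_{w∈Λ} p_{ℓ,j}(w)·(−2c)·(r_ℓ^j + w·L − r_ℓ^{j+1})_i, where for each spring (ℓ,j) the per-spring winding probability is p_{ℓ,j}(w) = μ(r_ℓ^j, r_ℓ^{j+1}, w) / ∑_{w'∈Λ} μ(r_ℓ^j, r_ℓ^{j+1}, w'), and bead indices are cyclic within each particle. -/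

import Mathlib

open Finset Real

noncomputable section

/-- Winding window: integer vectors `w : Fin d → ℤ` with `-W ≤ w i ≤ W` in every coordinate. -/
def windowSet (d W : ℕ) : Finset (Fin d → ℤ) :=
  Fintype.piFinset fun _ => Finset.Icc (-(W : ℤ)) (W : ℤ)

/-- The set of all winding assignments `w : Fin N → Fin P → Λ`. -/
def WAll (N P d W : ℕ) : Finset (Fin N → Fin P → Fin d → ℤ) :=
  Fintype.piFinset fun _ => Fintype.piFinset fun _ => windowSet d W

/-- Gaussian spring weight `μ(x, y, w) = exp(-βc ∑ᵢ (xᵢ + wᵢ L - yᵢ)²)`. -/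
def mu (d : ℕ) (β c L : ℝ) (x y : Fin d → ℝ) (w : Fin d → ℤ) : ℝ :=
  Real.exp (-(β * c * ∑ i, (x i + (w i : ℝ) * L - y i) ^ 2))

/-- Distinguishable configuration energy `E^{id,w}`, with cyclic bead index
`r_ℓ^{P+1} = r_ℓ^1` realized through addition on `Fin P`. -/
def Eid (N P d : ℕ) [NeZero P] (c L : ℝ) (r : Fin N → Fin P → Fin d → ℝ)
    (w : Fin N → Fin P → Fin d → ℤ) : ℝ :=
  c * ∑ ℓ : Fin N, ∑ j : Fin P, ∑ i : Fin d,
    (r ℓ j i + (w ℓ j i : ℝ) * L - r ℓ (j + 1) i) ^ 2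

/-- The distinguishable ring-polymer potential with PBC:
`exp(-β V_D(r)) = ∑_w exp(-β E^{id,w}(r))`. -/
def VD (N P d W : ℕ) [NeZero P] (β c L : ℝ) (r : Fin N → Fin P → Fin d → ℝ) : ℝ :=
  -(1 / β) * Real.log (∑ w ∈ WAll N P d W, Real.exp (-(β * Eid N P d c L r w)))

/-- Replace the `i`-th coordinate of bead `j` of particle `ℓ` by `t`. -/
def updR {N P d : ℕ} (r : Fin N → Fin P → Fin d → ℝ) (ℓ : Fin N) (j : Fin P) (i : Fin d)
    (t : ℝ) : Fin N → Fin P → Fin d → ℝ :=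
  Function.update r ℓ (Function.update (r ℓ) j (Function.update (r ℓ j) i t))


lemma updR_apply {N P d : ℕ} (r : Fin N → Fin P → Fin d → ℝ) (ℓ : Fin N) (j : Fin P) (i : Fin d)
    (t : ℝ) (ℓ' : Fin N) (j' : Fin P) (i' : Fin d) :
    updR r ℓ j i t ℓ' j' i' = if ℓ' = ℓ ∧ j' = j ∧ i' = i then t else r ℓ' j' i' := by
  unfold updR
  rcases eq_or_ne ℓ' ℓ with h1 | h1 <;> rcases eq_or_ne j' j with h2 | h2 <;>
    rcases eq_or_ne i' i with h3 | h3 <;>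
    simp [h1, h2, h3, Function.update_apply]

lemma updR_self {N P d : ℕ} (r : Fin N → Fin P → Fin d → ℝ) (ℓ : Fin N) (j : Fin P) (i : Fin d) :
    updR r ℓ j i (r ℓ j i) = r := by
  simp [updR]

lemma windowSet_nonempty (d W : ℕ) : (windowSet d W).Nonempty :=
  ⟨0, by simp [windowSet, Fintype.mem_piFinset]⟩

lemma mu_pos (d : ℕ) (β c L : ℝ) (x y : Fin d → ℝ) (w : Fin d → ℤ) : 0 < mu d β c L x y w :=
  Real.exp_pos _

lemma Z_pos (d W : ℕ) (β c L : ℝ) (x y : Fin d → ℝ) :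
    0 < ∑ w ∈ windowSet d W, mu d β c L x y w :=
  Finset.sum_pos (fun w _ => mu_pos d β c L x y w) (windowSet_nonempty d W)

lemma hasDerivAt_coord {N P d : ℕ} (r : Fin N → Fin P → Fin d → ℝ) (ℓ : Fin N) (j : Fin P)
    (i : Fin d) (ℓ' : Fin N) (j' : Fin P) (i' : Fin d) (t₀ : ℝ) :
    HasDerivAt (fun t => updR r ℓ j i t ℓ' j' i')
      (if ℓ' = ℓ ∧ j' = j ∧ i' = i then 1 else 0) t₀ := by
  simp only [updR_apply]
  split_ifs
  · exact hasDerivAt_id t₀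
  · exact hasDerivAt_const t₀ _

lemma hasDerivAt_Eid (N P d : ℕ) [NeZero P] (c L : ℝ) (r : Fin N → Fin P → Fin d → ℝ)
    (w : Fin N → Fin P → Fin d → ℤ) (ℓ : Fin N) (j : Fin P) (i : Fin d) :
    HasDerivAt (fun t => Eid N P d c L (updR r ℓ j i t) w)
      (c * ∑ ℓ' : Fin N, ∑ j' : Fin P, ∑ i' : Fin d,
        (2 * (r ℓ' j' i' + (w ℓ' j' i' : ℝ) * L - r ℓ' (j' + 1) i') *
          ((if ℓ' = ℓ ∧ j' = j ∧ i' = i then (1:ℝ) else 0) -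
           (if ℓ' = ℓ ∧ j' + 1 = j ∧ i' = i then (1:ℝ) else 0))))
      (r ℓ j i) := by
  unfold Eid
  apply HasDerivAt.const_mul
  apply HasDerivAt.fun_sum; intro ℓ' _
  apply HasDerivAt.fun_sum; intro j' _
  apply HasDerivAt.fun_sum; intro i' _
  have h1 := hasDerivAt_coord r ℓ j i ℓ' j' i' (r ℓ j i)
  have h2 := hasDerivAt_coord r ℓ j i ℓ' (j' + 1) i' (r ℓ j i)
  have h := ((h1.add_const ((w ℓ' j' i' : ℝ) * L)).sub h2).pow 2
  refine h.congr_deriv (Eq.symm ?_)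
  simp only [Pi.sub_apply]
  rw [updR_self]
  push_cast
  ring

lemma Dbig_eq (N P d : ℕ) [NeZero P] (c L : ℝ) (r : Fin N → Fin P → Fin d → ℝ)
    (w : Fin N → Fin P → Fin d → ℤ) (ℓ : Fin N) (j : Fin P) (i : Fin d) :
    (c * ∑ ℓ' : Fin N, ∑ j' : Fin P, ∑ i' : Fin d,
        (2 * (r ℓ' j' i' + (w ℓ' j' i' : ℝ) * L - r ℓ' (j' + 1) i') *
          ((if ℓ' = ℓ ∧ j' = j ∧ i' = i then (1:ℝ) else 0) -
           (if ℓ' = ℓ ∧ j' + 1 = j ∧ i' = i then (1:ℝ) else 0))))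
    = (2 * c * (r ℓ j i - r ℓ (j-1) i - (w ℓ (j-1) i : ℝ) * L))
      + (2 * c * (r ℓ j i + (w ℓ j i : ℝ) * L - r ℓ (j+1) i)) := by
  simp only [← eq_sub_iff_add_eq, mul_sub, mul_ite, mul_one, mul_zero,
    Finset.sum_sub_distrib]
  simp [ite_and, sub_add_cancel]
  ring

lemma exp_Eid_eq (N P d : ℕ) [NeZero P] (β c L : ℝ) (r : Fin N → Fin P → Fin d → ℝ)
    (w : Fin N → Fin P → Fin d → ℤ) :
    Real.exp (-(β * Eid N P d c L r w)) =
      ∏ ℓ' : Fin N, ∏ j' : Fin P, mu d β c L (r ℓ' j') (r ℓ' (j' + 1)) (w ℓ' j') := by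
  simp only [mu, ← Real.exp_sum]
  congr 1
  rw [Eid]
  rw [Finset.mul_sum, Finset.mul_sum, ← Finset.sum_neg_distrib]
  refine Finset.sum_congr rfl fun ℓ' _ => ?_
  rw [Finset.mul_sum, Finset.mul_sum, ← Finset.sum_neg_distrib]
  exact Finset.sum_congr rfl fun j' _ => by ring

lemma sum_WAll_prod (N P d W : ℕ) (f : Fin N → Fin P → (Fin d → ℤ) → ℝ) :
    ∑ w ∈ WAll N P d W, ∏ ℓ' : Fin N, ∏ j' : Fin P, f ℓ' j' (w ℓ' j')
      = ∏ ℓ' : Fin N, ∏ j' : Fin P, ∑ u ∈ windowSet d W, f ℓ' j' u := by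
  rw [WAll, eq_comm]
  simp_rw [Finset.prod_univ_sum]

lemma prod_collapse {N P : ℕ} (ℓ : Fin N) (k : Fin P) (v : Fin N → Fin P → ℝ) :
    (∏ ℓ' : Fin N, ∏ j' : Fin P, (if ℓ' = ℓ ∧ j' = k then v ℓ' j' else 1)) = v ℓ k := by
  simp [ite_and]

lemma key (N P d W : ℕ) [NeZero P] (β c L : ℝ) (r : Fin N → Fin P → Fin d → ℝ)
    (hZpos : ∀ (x y : Fin d → ℝ), 0 < ∑ u ∈ windowSet d W, mu d β c L x y u)
    (ℓ : Fin N) (k : Fin P) (g : (Fin d → ℤ) → ℝ) :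
    ∑ w ∈ WAll N P d W, Real.exp (-(β * Eid N P d c L r w)) * g (w ℓ k)
      = (∑ u ∈ windowSet d W,
          (mu d β c L (r ℓ k) (r ℓ (k + 1)) u /
            ∑ u' ∈ windowSet d W, mu d β c L (r ℓ k) (r ℓ (k + 1)) u') * g u)
        * ∑ w ∈ WAll N P d W, Real.exp (-(β * Eid N P d c L r w)) := by
  set Z : Fin N → Fin P → ℝ :=
    fun ℓ' j' => ∑ u ∈ windowSet d W, mu d β c L (r ℓ' j') (r ℓ' (j' + 1)) u with hZ
  have hZne : ∀ ℓ' j', Z ℓ' j' ≠ 0 := fun ℓ' j' => (hZpos _ _).ne'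
  have hS : ∑ w ∈ WAll N P d W, Real.exp (-(β * Eid N P d c L r w))
      = ∏ ℓ' : Fin N, ∏ j' : Fin P, Z ℓ' j' := by
    simp_rw [exp_Eid_eq]
    exact sum_WAll_prod N P d W _
  have hL : ∑ w ∈ WAll N P d W, Real.exp (-(β * Eid N P d c L r w)) * g (w ℓ k)
      = ∏ ℓ' : Fin N, ∏ j' : Fin P, ∑ u ∈ windowSet d W,
          mu d β c L (r ℓ' j') (r ℓ' (j' + 1)) u * (if ℓ' = ℓ ∧ j' = k then g u else 1) := by
    rw [← sum_WAll_prod N P d W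
      (fun ℓ' j' u => mu d β c L (r ℓ' j') (r ℓ' (j' + 1)) u * (if ℓ' = ℓ ∧ j' = k then g u else 1))]
    refine Finset.sum_congr rfl fun w _ => ?_
    rw [exp_Eid_eq]
    simp only [Finset.prod_mul_distrib]
    rw [prod_collapse ℓ k (fun ℓ' j' => g (w ℓ' j'))]
  rw [hL, hS]
  have hstep : ∀ ℓ' j', (∑ u ∈ windowSet d W,
      mu d β c L (r ℓ' j') (r ℓ' (j' + 1)) u * (if ℓ' = ℓ ∧ j' = k then g u else 1))
      = (if ℓ' = ℓ ∧ j' = k then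
          (∑ u ∈ windowSet d W, mu d β c L (r ℓ' j') (r ℓ' (j' + 1)) u * g u) / Z ℓ' j'
        else 1) * Z ℓ' j' := by
    intro ℓ' j'
    split_ifs with h
    · rw [div_mul_cancel₀ _ (hZne ℓ' j')]
    · simp [Z]
  simp_rw [hstep]
  simp only [Finset.prod_mul_distrib]
  rw [prod_collapse ℓ k
    (fun ℓ' j' => (∑ u ∈ windowSet d W, mu d β c L (r ℓ' j') (r ℓ' (j' + 1)) u * g u) / Z ℓ' j')]
  congr 1
  rw [Finset.sum_div]
  exact Finset.sum_congr rfl fun u _ => by rw [div_mul_eq_mul_div]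

/-- grouped force expression for distinguishable particles with PBC.
Minus the partial derivative of `V_D` w.r.t. `(r_ℓ^j)_i` equals the sum of the two spring
contributions, each averaged over the per-spring winding probability
`p_{ℓ,j}(w) = μ(r_ℓ^j, r_ℓ^{j+1}, w) / ∑_{w'} μ(r_ℓ^j, r_ℓ^{j+1}, w')`. -/
theorem stmt5 (N P d W : ℕ) [NeZero N] [NeZero P] (hd : 0 < d)
    (β L c : ℝ) (hβ : 0 < β) (hL : 0 < L) (hc : 0 < c)
    (r : Fin N → Fin P → Fin d → ℝ) (ℓ : Fin N) (j : Fin P) (i : Fin d) :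
    HasDerivAt (fun t => VD N P d W β c L (updR r ℓ j i t))
      (-(∑ w ∈ windowSet d W,
            (mu d β c L (r ℓ (j - 1)) (r ℓ j) w /
                ∑ w' ∈ windowSet d W, mu d β c L (r ℓ (j - 1)) (r ℓ j) w') *
              ((-2 * c) * (r ℓ j i - r ℓ (j - 1) i - (w i : ℝ) * L)) +
          ∑ w ∈ windowSet d W,
            (mu d β c L (r ℓ j) (r ℓ (j + 1)) w /
                ∑ w' ∈ windowSet d W, mu d β c L (r ℓ j) (r ℓ (j + 1)) w') *
              ((-2 * c) * (r ℓ j i + (w i : ℝ) * L - r ℓ (j + 1) i))))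
      (r ℓ j i) := by
  classical
  have hWne : (WAll N P d W).Nonempty :=
    ⟨fun _ _ => 0, by simp [WAll, windowSet, Fintype.mem_piFinset]⟩
  have hSpos : 0 < ∑ w ∈ WAll N P d W, Real.exp (-(β * Eid N P d c L r w)) :=
    Finset.sum_pos (fun _ _ => Real.exp_pos _) hWne
  -- the per-winding derivative
  have hexp : ∀ w ∈ WAll N P d W,
      HasDerivAt (fun t => Real.exp (-(β * Eid N P d c L (updR r ℓ j i t) w)))
        (Real.exp (-(β * Eid N P d c L r w)) *
          (-(β * ((2 * c * (r ℓ j i - r ℓ (j - 1) i - (w ℓ (j - 1) i : ℝ) * L))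
            + (2 * c * (r ℓ j i + (w ℓ j i : ℝ) * L - r ℓ (j + 1) i)))))) (r ℓ j i) := by
    intro w _
    have hE := hasDerivAt_Eid N P d c L r w ℓ j i
    rw [Dbig_eq N P d c L r w ℓ j i] at hE
    have h := ((hE.const_mul β).fun_neg).exp
    rwa [updR_self] at h
  have hS := HasDerivAt.fun_sum hexp
  have hne : (∑ w ∈ WAll N P d W,
      Real.exp (-(β * Eid N P d c L (updR r ℓ j i (r ℓ j i)) w))) ≠ 0 := by
    rw [updR_self]; exact hSpos.ne'
  have hlog := (hS.log hne).const_mul (-(1/β))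
  have hfun : (fun t => VD N P d W β c L (updR r ℓ j i t))
      = fun t => -(1/β) * Real.log (∑ w ∈ WAll N P d W,
          Real.exp (-(β * Eid N P d c L (updR r ℓ j i t) w))) := rfl
  rw [hfun]
  refine hlog.congr_deriv (Eq.symm ?_)
  rw [updR_self]
  -- abbreviations
  have hkey1 := key N P d W β c L r (fun x y => Z_pos d W β c L x y) ℓ (j - 1)
    (fun u => 2 * c * (r ℓ j i - r ℓ (j - 1) i - (u i : ℝ) * L))
  have hkey2 := key N P d W β c L r (fun x y => Z_pos d W β c L x y) ℓ j
    (fun u => 2 * c * (r ℓ j i + (u i : ℝ) * L - r ℓ (j + 1) i))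
  simp only [sub_add_cancel] at hkey1
  have hsplit : ∑ w ∈ WAll N P d W,
      Real.exp (-(β * Eid N P d c L r w)) *
        (-(β * ((2 * c * (r ℓ j i - r ℓ (j - 1) i - (w ℓ (j - 1) i : ℝ) * L))
          + (2 * c * (r ℓ j i + (w ℓ j i : ℝ) * L - r ℓ (j + 1) i)))))
      = (-β) * ((∑ w ∈ WAll N P d W, Real.exp (-(β * Eid N P d c L r w)) *
            (2 * c * (r ℓ j i - r ℓ (j - 1) i - (w ℓ (j - 1) i : ℝ) * L)))
        + (∑ w ∈ WAll N P d W, Real.exp (-(β * Eid N P d c L r w)) *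
            (2 * c * (r ℓ j i + (w ℓ j i : ℝ) * L - r ℓ (j + 1) i)))) := by
    rw [← Finset.sum_add_distrib, Finset.mul_sum]
    exact Finset.sum_congr rfl fun w _ => by ring
  rw [hsplit, hkey1, hkey2]
  have h1 : ∑ w ∈ windowSet d W,
      (mu d β c L (r ℓ (j - 1)) (r ℓ j) w /
          ∑ w' ∈ windowSet d W, mu d β c L (r ℓ (j - 1)) (r ℓ j) w') *
        ((-2 * c) * (r ℓ j i - r ℓ (j - 1) i - (w i : ℝ) * L))
      = -∑ u ∈ windowSet d W,
        (mu d β c L (r ℓ (j - 1)) (r ℓ j) u /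
            ∑ u' ∈ windowSet d W, mu d β c L (r ℓ (j - 1)) (r ℓ j) u') *
          (2 * c * (r ℓ j i - r ℓ (j - 1) i - (u i : ℝ) * L)) := by
    rw [← Finset.sum_neg_distrib]
    exact Finset.sum_congr rfl fun u _ => by ring
  have h2 : ∑ w ∈ windowSet d W,
      (mu d β c L (r ℓ j) (r ℓ (j + 1)) w /
          ∑ w' ∈ windowSet d W, mu d β c L (r ℓ j) (r ℓ (j + 1)) w') *
        ((-2 * c) * (r ℓ j i + (w i : ℝ) * L - r ℓ (j + 1) i))
      = -∑ u ∈ windowSet d W,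
        (mu d β c L (r ℓ j) (r ℓ (j + 1)) u /
            ∑ u' ∈ windowSet d W, mu d β c L (r ℓ j) (r ℓ (j + 1)) u') *
          (2 * c * (r ℓ j i + (u i : ℝ) * L - r ℓ (j + 1) i)) := by
    rw [← Finset.sum_neg_distrib]
    exact Finset.sum_congr rfl fun u _ => by ring
  rw [h1, h2]
  field_simp
  ring
  exact congrArg₂ (· + ·) (Finset.sum_congr rfl fun _ _ => by ring)
    (Finset.sum_congr rfl fun _ _ => by ring)

end
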